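/- arXiv:1709.06367 — 8 statements merged into one kernel-verified Lean document; each statement's English description precedes it below -/
import Mathlib

section
/- For every real s ≥ 1, every instance of the favorite-machine scheduling game on two machines with parameter s, and every allocation x that is a pure Nash equilibrium, the makespan of x is at most (s³ + s² + s + 1)/(s² + s + 1) times the optimal makespan. -/
open Finset

/-- Processing time of job `j` on machine `i` in the favorite-machine model:
`q j` on the favorite machine `f j` and `s * q j` on the other machine. -/
noncomputable def ptime (s : ℝ) {n : ℕ} (q : Fin n → ℝ) (f : Fin n → Fin 2)
    (i : Fin 2) (j : Fin n) : ℝ :=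
  if f j = i then q j else s * q j

/-- Load of machine `i` under allocation `x`. -/
noncomputable def load (s : ℝ) {n : ℕ} (q : Fin n → ℝ) (f : Fin n → Fin 2)
    (x : Fin n → Fin 2) (i : Fin 2) : ℝ :=
  ∑ j ∈ Finset.univ.filter (fun j => x j = i), ptime s q f i j

/-- Makespan (maximum load) of allocation `x`. -/
noncomputable def makespan (s : ℝ) {n : ℕ} (q : Fin n → ℝ) (f : Fin n → Fin 2)
    (x : Fin n → Fin 2) : ℝ :=
  max (load s q f x 0) (load s q f x 1)

/-- The optimal (minimum) makespan over all allocations. -/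
noncomputable def optMakespan (s : ℝ) {n : ℕ} (q : Fin n → ℝ) (f : Fin n → Fin 2) : ℝ :=
  ⨅ y : Fin n → Fin 2, makespan s q f y

/-- Pure Nash equilibrium: no job can move to the other machine and find there
a load smaller than its current cost. -/
def IsNE (s : ℝ) {n : ℕ} (q : Fin n → ℝ) (f : Fin n → Fin 2)
    (x : Fin n → Fin 2) : Prop :=
  ∀ j : Fin n, ∀ i : Fin 2, i ≠ x j →
    load s q f x (x j) ≤ load s q f (Function.update x j i) i

/-- Strong equilibrium: for every deviation `y` differing from `x` on a nonempty
set of jobs, some deviating job does not improve its cost. -/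
def IsSE (s : ℝ) {n : ℕ} (q : Fin n → ℝ) (f : Fin n → Fin 2)
    (x : Fin n → Fin 2) : Prop :=
  ∀ y : Fin n → Fin 2, (∃ j, y j ≠ x j) →
    ∃ j, y j ≠ x j ∧ load s q f x (x j) ≤ load s q f y (y j)

set_option maxHeartbeats 1000000 in
lemma ptime_nonneg (s : ℝ) (hs : 1 ≤ s) {n : ℕ} (q : Fin n → ℝ) (hq : ∀ j, 0 < q j)
    (f : Fin n → Fin 2) (i : Fin 2) (j : Fin n) : 0 ≤ ptime s q f i j := by
  unfold ptime; split_ifs <;> nlinarith [hq j]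

lemma ptime_le (s : ℝ) (hs : 1 ≤ s) {n : ℕ} (q : Fin n → ℝ) (hq : ∀ j, 0 < q j)
    (f : Fin n → Fin 2) (i i' : Fin 2) (j : Fin n) :
    ptime s q f i j ≤ s * ptime s q f i' j := by
  have s0 : (0:ℝ) ≤ s := le_trans zero_le_one hs
  have h1 : (1:ℝ)*1 ≤ s*s := mul_le_mul hs hs zero_le_one s0
  have h2 : 0 ≤ (s-1)*s*(q j) := mul_nonneg (mul_nonneg (sub_nonneg.mpr hs) s0) (le_of_lt (hq j))
  unfold ptime; split_ifs <;> nlinarith [hq j, h1, h2]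

lemma load_update (s : ℝ) {n : ℕ} (q : Fin n → ℝ) (f : Fin n → Fin 2)
    (x : Fin n → Fin 2) (j : Fin n) (i : Fin 2) (hj : x j ≠ i) :
    load s q f (Function.update x j i) i = load s q f x i + ptime s q f i j := by
  unfold load
  have hset : (univ.filter fun k => Function.update x j i k = i)
      = insert j (univ.filter fun k => x k = i) := by
    ext k
    by_cases hk : k = j
    · subst hk; simp [Function.update_self, hj]
    · simp [Function.update_of_ne hk, hk]
  rw [hset, Finset.sum_insert (by simp [hj]), add_comm]

set_option maxHeartbeats 1000000 in
private lemma key (s : ℝ) (hs : 1 ≤ s) {n : ℕ} (q : Fin n → ℝ) (hq : ∀ j, 0 < q j)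
    (f : Fin n → Fin 2) (x y : Fin n → Fin 2) (hx : IsNE s q f x)
    (a b : Fin 2) (hab : a ≠ b) :
    (s^2+s+1) * load s q f x a ≤
      (s^3+s^2+s+1) * max (load s q f y a) (load s q f y b) := by
  have htwo : ∀ c : Fin 2, c = a ∨ c = b :=
    (by decide : ∀ a b : Fin 2, a ≠ b → ∀ c : Fin 2, c = a ∨ c = b) a b hab
  have s0 : (0:ℝ) ≤ s := le_trans zero_le_one hs
  set D := univ.filter (fun j => x j = a ∧ y j = b) with hD
  set W := univ.filter (fun j => x j = a ∧ y j = a) with hW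
  set U := univ.filter (fun j => x j = b ∧ y j = a) with hU
  set E := univ.filter (fun j => x j = b ∧ y j = b) with hE
  set M := max (load s q f y a) (load s q f y b) with hM
  have pnn : ∀ (i : Fin 2) (j : Fin n), 0 ≤ ptime s q f i j :=
    fun i j => ptime_nonneg s hs q hq f i j
  -- identities
  have I1 : load s q f x a
      = (∑ j ∈ D, ptime s q f a j) + (∑ j ∈ W, ptime s q f a j) := by
    rw [load, Finset.sum_filter, hD, hW, Finset.sum_filter, Finset.sum_filter,
      ← Finset.sum_add_distrib]
    refine Finset.sum_congr rfl fun j _ => ?_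
    rcases htwo (x j) with hxx | hxx <;> rcases htwo (y j) with hyy | hyy <;>
      simp [hxx, hyy, hab, Ne.symm hab]
  have I2 : load s q f x b
      = (∑ j ∈ U, ptime s q f b j) + (∑ j ∈ E, ptime s q f b j) := by
    rw [load, Finset.sum_filter, hU, hE, Finset.sum_filter, Finset.sum_filter,
      ← Finset.sum_add_distrib]
    refine Finset.sum_congr rfl fun j _ => ?_
    rcases htwo (x j) with hxx | hxx <;> rcases htwo (y j) with hyy | hyy <;>
      simp [hxx, hyy, hab, Ne.symm hab]
  have I3 : load s q f y a
      = (∑ j ∈ U, ptime s q f a j) + (∑ j ∈ W, ptime s q f a j) := by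
    rw [load, Finset.sum_filter, hU, hW, Finset.sum_filter, Finset.sum_filter,
      ← Finset.sum_add_distrib]
    refine Finset.sum_congr rfl fun j _ => ?_
    rcases htwo (x j) with hxx | hxx <;> rcases htwo (y j) with hyy | hyy <;>
      simp [hxx, hyy, hab, Ne.symm hab]
  have I4 : load s q f y b
      = (∑ j ∈ E, ptime s q f b j) + (∑ j ∈ D, ptime s q f b j) := by
    rw [load, Finset.sum_filter, hE, hD, Finset.sum_filter, Finset.sum_filter,
      ← Finset.sum_add_distrib]
    refine Finset.sum_congr rfl fun j _ => ?_
    rcases htwo (x j) with hxx | hxx <;> rcases htwo (y j) with hyy | hyy <;>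
      simp [hxx, hyy, hab, Ne.symm hab]
  -- basic bounds
  have L4 : (∑ j ∈ E, ptime s q f b j) + (∑ j ∈ D, ptime s q f b j) ≤ M := by
    rw [← I4]; exact le_max_right _ _
  have L5 : (∑ j ∈ U, ptime s q f a j) + (∑ j ∈ W, ptime s q f a j) ≤ M := by
    rw [← I3]; exact le_max_left _ _
  have L9 : (∑ j ∈ D, ptime s q f a j) ≤ s * (∑ j ∈ D, ptime s q f b j) := by
    rw [Finset.mul_sum]; exact Finset.sum_le_sum fun j _ => ptime_le s hs q hq f a b j
  have L10 : (∑ j ∈ U, ptime s q f b j) ≤ s * (∑ j ∈ U, ptime s q f a j) := by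
    rw [Finset.mul_sum]; exact Finset.sum_le_sum fun j _ => ptime_le s hs q hq f b a j
  have nnE : 0 ≤ ∑ j ∈ E, ptime s q f b j := Finset.sum_nonneg fun j _ => pnn b j
  have nnD : 0 ≤ ∑ j ∈ D, ptime s q f b j := Finset.sum_nonneg fun j _ => pnn b j
  have nnU : 0 ≤ ∑ j ∈ U, ptime s q f a j := Finset.sum_nonneg fun j _ => pnn a j
  have nnW : 0 ≤ ∑ j ∈ W, ptime s q f a j := Finset.sum_nonneg fun j _ => pnn a j
  have nnM : 0 ≤ M := le_trans (Finset.sum_nonneg fun j _ => pnn b j)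
    (le_trans (le_add_of_nonneg_right nnD) L4)
  rcases D.eq_empty_or_nonempty with hDe | ⟨j₀, hj0⟩
  · -- D empty : C = PaW ≤ M
    rw [hDe, Finset.sum_empty] at I1
    have hCM : load s q f x a ≤ M := by
      rw [I1]; linarith [L5, nnU]
    linarith [mul_le_mul_of_nonneg_left hCM (show (0:ℝ) ≤ s^2+s+1 by nlinarith),
      mul_nonneg (pow_nonneg s0 3) nnM]
  · -- NE for j₀ ∈ D
    have hj0m := (Finset.mem_filter.mp hj0).2
    have hne0 := hx j₀ b (by rw [hj0m.1]; exact Ne.symm hab)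
    rw [hj0m.1, load_update s q f x j₀ b (by rw [hj0m.1]; exact hab), I2] at hne0
    have L3 : ptime s q f b j₀ ≤ ∑ j ∈ D, ptime s q f b j :=
      Finset.single_le_sum (fun j _ => pnn b j) hj0
    rcases W.eq_empty_or_nonempty with hWe | ⟨j₁, hj1⟩
    · -- W empty : C = PaD ≤ s * PbD ≤ s * M
      rw [hWe, Finset.sum_empty, add_zero] at I1
      have hCM : load s q f x a ≤ s * M := by
        rw [I1]
        calc (∑ j ∈ D, ptime s q f a j) ≤ s * (∑ j ∈ D, ptime s q f b j) := L9
        _ ≤ s * M := by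
            apply mul_le_mul_of_nonneg_left _ s0
            linarith [L4, nnE]
      linarith [mul_le_mul_of_nonneg_left hCM (show (0:ℝ) ≤ s^2+s+1 by nlinarith), nnM]
    · -- main case
      have hj1m := (Finset.mem_filter.mp hj1).2
      have hne1 := hx j₁ b (by rw [hj1m.1]; exact Ne.symm hab)
      rw [hj1m.1, load_update s q f x j₁ b (by rw [hj1m.1]; exact hab), I2] at hne1
      have L7 : ptime s q f b j₁ ≤ s * ptime s q f a j₁ := ptime_le s hs q hq f b a j₁
      have L8 : ptime s q f a j₁ ≤ ∑ j ∈ W, ptime s q f a j :=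
        Finset.single_le_sum (fun j _ => pnn a j) hj1
      -- scaled inequalities for the certificate
      have c1 : (0:ℝ) ≤ s^2+1 := by positivity
      have c2 : (0:ℝ) ≤ s*(s^2+1) := by positivity
      have c3 : (0:ℝ) ≤ s^2 := by positivity
      have c4 : (0:ℝ) ≤ s^3 := by positivity
      have M1 : s * load s q f x a
          = s * (∑ j ∈ D, ptime s q f a j) + s * (∑ j ∈ W, ptime s q f a j) := by
        rw [I1]; ring
      have M4 := mul_le_mul_of_nonneg_left L4 c1
      have M5 := mul_le_mul_of_nonneg_left L5 c2
      have M6 := mul_le_mul_of_nonneg_left hne1 c3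
      have M7 := mul_le_mul_of_nonneg_left L7 c3
      have M8 := mul_le_mul_of_nonneg_left L8 c4
      have M9 := mul_le_mul_of_nonneg_left L9 s0
      have M10 := mul_le_mul_of_nonneg_left L10 c1
      linarith [M1, hne0, L3, M4, M5, M6, M7, M8, M9, M10]

theorem poa_upper_bound
    (s : ℝ) (hs : 1 ≤ s)
    {n : ℕ} (q : Fin n → ℝ) (hq : ∀ j, 0 < q j)
    (f : Fin n → Fin 2) (x : Fin n → Fin 2) (hx : IsNE s q f x) :
    makespan s q f x ≤ ((s^3 + s^2 + s + 1)/(s^2 + s + 1)) * optMakespan s q f := by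
  obtain ⟨y, hy⟩ := Finite.exists_min (fun y : Fin n → Fin 2 => makespan s q f y)
  have hopt : optMakespan s q f = makespan s q f y :=
    le_antisymm (ciInf_le (Set.finite_range _).bddBelow y) (le_ciInf hy)
  have hd : (0:ℝ) < s^2+s+1 := by nlinarith
  have key0 := key s hs q hq f x y hx 0 1 (by decide)
  have key1 := key s hs q hq f x y hx 1 0 (by decide)
  rw [max_comm (load s q f y 1) (load s q f y 0)] at key1
  rw [hopt, makespan, makespan, div_mul_eq_mul_div, le_div_iff₀ hd]
  rcases max_cases (load s q f x 0) (load s q f x 1) with ⟨h1, _⟩ | ⟨h1, _⟩ <;>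
    rw [h1] <;> linarith [key0, key1]
end

section
/- Fix a real s ≥ 1 and consider the instance of the favorite-machine scheduling game on two machines with parameter s consisting of four jobs: job A of size (s² + s)/(s² + s + 1) with favorite machine 2; job B of size 1/(s(s² + s + 1)) with favorite machine 1; job C of size s²/(s² + s + 1) with favorite machine 1; and job D of size (s + 1)/(s² + s + 1) with favorite machine 1. Then the allocation assigning A and D to machine 1 and B and C to machine 2 is a pure Nash equilibrium whose makespan equals (s³ + s² + s + 1)/(s² + s + 1), while the optimal makespan of this instance is at most 1. Consequently, the price of anarchy at parameter s is at least (s³ + s² + s + 1)/(s² + s + 1). -/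
open Finset

set_option maxHeartbeats 2000000 in
theorem poa_lower_bound
    (s : ℝ) (hs : 1 ≤ s)
    (q : Fin 4 → ℝ) (hq : q = ![(s^2 + s)/(s^2 + s + 1), 1/(s*(s^2 + s + 1)), s^2/(s^2 + s + 1), (s + 1)/(s^2 + s + 1)])
    (f : Fin 4 → Fin 2) (hf : f = ![1, 0, 0, 0])
    (x : Fin 4 → Fin 2) (hx : x = ![0, 1, 1, 0]) :
    IsNE s q f x ∧
      makespan s q f x = (s^3 + s^2 + s + 1)/(s^2 + s + 1) ∧
      optMakespan s q f ≤ 1 ∧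
      ((s^3 + s^2 + s + 1)/(s^2 + s + 1)) * optMakespan s q f ≤ makespan s q f x := by
  subst hq hf hx
  have hs0 : (0:ℝ) < s := by linarith
  have hT : (0:ℝ) < s^2+s+1 := by positivity
  set Q : Fin 4 → ℝ := ![(s^2 + s)/(s^2 + s + 1), 1/(s*(s^2 + s + 1)), s^2/(s^2 + s + 1), (s + 1)/(s^2 + s + 1)] with hQdef
  have hQ : ∀ j : Fin 4, 0 ≤ Q j := by
    intro j
    fin_cases j <;>
      simp only [hQdef, Matrix.cons_val_zero, Matrix.cons_val_one, Matrix.head_cons,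
        Matrix.cons_val_two, Matrix.tail_cons, Matrix.cons_val_three] <;>
      apply div_nonneg <;> nlinarith
  have hmk : makespan s Q ![1, 0, 0, 0] ![0, 1, 1, 0] = (s^3 + s^2 + s + 1)/(s^2 + s + 1) := by
    simp only [makespan, load, ptime, Finset.sum_filter, Fin.sum_univ_four, hQdef,
      Matrix.cons_val_zero, Matrix.cons_val_one, Matrix.head_cons,
      Matrix.cons_val_two, Matrix.tail_cons, Matrix.cons_val_three]
    norm_num
    rw [max_eq_left]
    · field_simp; ring
    · field_simp
      nlinarith [hs0, pow_pos hs0 2, pow_pos hs0 3, pow_pos hs0 4, pow_pos hs0 5, pow_pos hs0 6]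
  have hopt : optMakespan s Q ![1, 0, 0, 0] ≤ 1 := by
    have hbdd : BddBelow (Set.range fun y : Fin 4 → Fin 2 => makespan s Q ![1, 0, 0, 0] y) := by
      refine ⟨0, ?_⟩
      rintro r ⟨y, rfl⟩
      refine le_trans ?_ (le_max_left _ _)
      refine Finset.sum_nonneg fun j _ => ?_
      unfold ptime
      split <;> [exact hQ j; exact mul_nonneg hs0.le (hQ j)]
    have h1 : makespan s Q ![1, 0, 0, 0] ![1, 1, 0, 0] ≤ 1 := by
      simp only [makespan, load, ptime, Finset.sum_filter, Fin.sum_univ_four, hQdef,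
        Matrix.cons_val_zero, Matrix.cons_val_one, Matrix.head_cons,
        Matrix.cons_val_two, Matrix.tail_cons, Matrix.cons_val_three]
      norm_num
      constructor <;> (field_simp; nlinarith)
    exact le_trans (ciInf_le hbdd _) h1
  have hNE : IsNE s Q ![1, 0, 0, 0] ![0, 1, 1, 0] := by
    intro j i hi
    fin_cases j <;> fin_cases i <;>
      first
      | (exfalso; revert hi; decide)
      | (simp only [load, ptime, Finset.sum_filter, Fin.sum_univ_four, Function.update_apply,
          Fin.ext_iff, hQdef, Matrix.cons_val_zero, Matrix.cons_val_one, Matrix.head_cons,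
          Matrix.cons_val_two, Matrix.tail_cons, Matrix.cons_val_three,
          show ((3:Fin 4):ℕ) = 3 from rfl, show ((2:Fin 4):ℕ) = 2 from rfl,
          show ((1:Fin 2):ℕ) = 1 from rfl, show ((0:Fin 2):ℕ) = 0 from rfl]
         norm_num
         field_simp
         ring_nf
         nlinarith [hs0, pow_pos hs0 2, pow_pos hs0 3, pow_pos hs0 4, pow_pos hs0 5, pow_pos hs0 6, pow_pos hs0 7, pow_pos hs0 8, pow_pos hs0 9, pow_pos hs0 10, pow_pos hs0 11, pow_pos hs0 12, pow_pos hs0 13])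
  refine ⟨hNE, hmk, hopt, ?_⟩
  rw [hmk]
  have hr : (0:ℝ) ≤ (s^3 + s^2 + s + 1)/(s^2 + s + 1) :=
    div_nonneg (by nlinarith) hT.le
  exact mul_le_of_le_one_right hr hopt
end

section
/- Fix a real s ≥ 1 and consider the instance of the favorite-machine scheduling game on two machines with parameter s consisting of two jobs, both of size 1, where job 1 has favorite machine 1 and job 2 has favorite machine 2. Then the allocation assigning job 1 to machine 2 and job 2 to machine 1 is a pure Nash equilibrium with makespan s, while the optimal makespan is 1. Consequently, the price of anarchy at parameter s is at least s. -/
open Finset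

theorem poa_lower_bound_s
    (s : ℝ) (hs : 1 ≤ s)
    (q : Fin 2 → ℝ) (hq : q = ![1, 1])
    (f : Fin 2 → Fin 2) (hf : f = ![0, 1])
    (x : Fin 2 → Fin 2) (hx : x = ![1, 0]) :
    IsNE s q f x ∧
      makespan s q f x = s ∧
      optMakespan s q f = 1 ∧
      (s) * optMakespan s q f ≤ makespan s q f x := by
  subst hq hf hx
  have hload : ∀ (y : Fin 2 → Fin 2) (i : Fin 2),
      load s ![1,1] ![0,1] y i =
        (if y 0 = i then (if (0:Fin 2) = i then (1:ℝ) else s) else 0) +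
        (if y 1 = i then (if (1:Fin 2) = i then (1:ℝ) else s) else 0) := by
    intro y i
    simp [load, Finset.sum_filter, Fin.sum_univ_two, ptime]
  have hms : makespan s ![1,1] ![0,1] ![1,0] = s := by
    simp [makespan, hload]
  have hone : ∀ y : Fin 2 → Fin 2, 1 ≤ makespan s ![1,1] ![0,1] y := by
    intro y
    have h0 : y 0 = 0 ∨ y 0 = 1 := by omega
    have h1 : y 1 = 0 ∨ y 1 = 1 := by omega
    rcases h0 with h0 | h0 <;> rcases h1 with h1 | h1 <;>
      simp [makespan, hload, h0, h1, le_max_iff] <;>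
      first | linarith | (left; linarith) | (right; linarith)
  have hopt : optMakespan s ![1,1] ![0,1] = 1 := by
    apply le_antisymm
    · have hb : BddBelow (Set.range fun y : Fin 2 → Fin 2 => makespan s ![1,1] ![0,1] y) :=
        ⟨1, by rintro _ ⟨y, rfl⟩; exact hone y⟩
      have := ciInf_le hb ![0, 1]
      have hv : makespan s ![1,1] ![0,1] ![0,1] = 1 := by
        simp [makespan, hload]
      rw [hv] at this
      exact this
    · exact le_ciInf hone
  refine ⟨?_, hms, hopt, by rw [hopt, hms, mul_one]⟩
  intro j i hi
  fin_cases j <;> fin_cases i <;>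
    simp_all [hload, Function.update] <;> linarith
end

section
/- Let s₃ ≈ 1.755 be the unique root in the interval (1,2) of s³ − 2s² + s − 1 = 0. For every real s with (1 + √5)/2 ≤ s ≤ s₃, every instance of the favorite-machine scheduling game on two machines with parameter s, and every allocation x that is a strong equilibrium, the makespan of x is at most (s + 1)/s times the optimal makespan. -/
open Finset

private lemma sum_ite_nonneg {n : ℕ} (p : Fin n → Prop) [DecidablePred p] (g : Fin n → ℝ)
    (hg : ∀ j, 0 ≤ g j) : 0 ≤ ∑ j, if p j then g j else 0 :=
  Finset.sum_nonneg fun j _ => by by_cases h : p j <;> simp [h, hg j]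

private lemma sum_ite_split {n : ℕ} (p r : Fin n → Prop) [DecidablePred p] [DecidablePred r]
    (g : Fin n → ℝ) :
    (∑ j, if p j then g j else 0) =
      (∑ j, if p j ∧ r j then g j else 0) + ∑ j, if p j ∧ ¬ r j then g j else 0 := by
  rw [← Finset.sum_add_distrib]
  refine Finset.sum_congr rfl fun j _ => ?_
  by_cases hp : p j <;> by_cases hr : r j <;> simp [hp, hr]

private lemma sum_ite_le_sum_ite {n : ℕ} (p r : Fin n → Prop) [DecidablePred p] [DecidablePred r]
    (g h : Fin n → ℝ) (hh : ∀ j, 0 ≤ h j) (imp : ∀ j, p j → r j ∧ g j ≤ h j) :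
    (∑ j, if p j then g j else 0) ≤ ∑ j, if r j then h j else 0 := by
  refine Finset.sum_le_sum fun j _ => ?_
  by_cases hp : p j
  · obtain ⟨hr, hle⟩ := imp j hp
    rw [if_pos hp, if_pos hr]; exact hle
  · rw [if_neg hp]
    by_cases hr : r j
    · rw [if_pos hr]; exact hh j
    · rw [if_neg hr]

private lemma load_eq_sum (s : ℝ) {n : ℕ} (q : Fin n → ℝ) (f : Fin n → Fin 2)
    (y : Fin n → Fin 2) (i : Fin 2) :
    load s q f y i = ∑ j, if y j = i then ptime s q f i j else 0 := by
  rw [load, Finset.sum_filter]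

set_option maxHeartbeats 1000000 in
private lemma main_bound (s : ℝ) (hs1 : 1 < s) (hs2 : s < 2) (hphi : s + 1 ≤ s^2)
    {n : ℕ} (q : Fin n → ℝ) (hq : ∀ j, 0 < q j) (f : Fin n → Fin 2) (x : Fin n → Fin 2)
    (hx : IsSE s q f x) (H L : Fin 2) (hHL : H ≠ L)
    (hba : load s q f x L ≤ load s q f x H) :
    load s q f x H ≤ ((s + 1)/s) * optMakespan s q f := by
  have hs0 : (0:ℝ) < s := by linarith
  have hdich : ∀ (u v w : Fin 2), u ≠ v → (w = u ∨ w = v) := by decide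
  have hfin : ∀ i : Fin 2, i = H ∨ i = L := fun i => hdich H L i hHL
  have hLH : L ≠ H := Ne.symm hHL
  have hpt_nonneg : ∀ (i : Fin 2) (j : Fin n), 0 ≤ ptime s q f i j := by
    intro i j; rw [ptime]
    split
    · exact (hq j).le
    · exact le_of_lt (mul_pos hs0 (hq j))
  have hpt_ge : ∀ (i : Fin 2) (j : Fin n), q j ≤ ptime s q f i j := by
    intro i j; rw [ptime]
    split
    · exact le_refl _
    · linarith [mul_lt_mul_of_pos_right hs1 (hq j)]
  have hload_nonneg : ∀ (y : Fin n → Fin 2) (i : Fin 2), 0 ≤ load s q f y i := by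
    intro y i; rw [load_eq_sum]
    exact sum_ite_nonneg _ _ (fun j => hpt_nonneg i j)
  have hload_le_mk : ∀ (y : Fin n → Fin 2) (i : Fin 2), load s q f y i ≤ makespan s q f y := by
    intro y i
    rcases hdich 0 1 i (by decide) with h | h
    · rw [h]; exact le_max_left _ _
    · rw [h]; exact le_max_right _ _
  have hmk_nonneg : ∀ y : Fin n → Fin 2, 0 ≤ makespan s q f y :=
    fun y => le_trans (hload_nonneg y 0) (hload_le_mk y 0)
  obtain ⟨z, hz⟩ := Finite.exists_min (makespan s q f)
  have hopt : optMakespan s q f = makespan s q f z := by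
    refine le_antisymm (ciInf_le ⟨0, ?_⟩ z) (le_ciInf hz)
    rintro w ⟨y, rfl⟩; exact hmk_nonneg y
  by_contra hcon
  push_neg at hcon
  set o := optMakespan s q f with ho_def
  set a := load s q f x H with ha_def
  set b := load s q f x L with hb_def
  have ho0 : 0 ≤ o := by rw [hopt]; exact hmk_nonneg z
  have key : (s + 1) * o < a * s := by
    rw [div_mul_eq_mul_div, div_lt_iff₀ hs0] at hcon
    exact hcon
  have hao : o < a := by
    by_contra h
    push_neg at h
    linarith only [key, ho0, mul_le_mul_of_nonneg_left h hs0.le]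
  have hoH : load s q f z H ≤ o := by rw [hopt]; exact hload_le_mk z H
  have hoL : load s q f z L ≤ o := by rw [hopt]; exact hload_le_mk z L
  -- every job is small
  have hqo : ∀ j, q j ≤ o := by
    intro j
    have h1 : q j ≤ ptime s q f (z j) j := hpt_ge _ j
    have h2 : ptime s q f (z j) j ≤ load s q f z (z j) := by
      rw [load_eq_sum]
      have := Finset.single_le_sum (f := fun k => if z k = z j then ptime s q f (z j) k else 0)
        (fun k _ => by by_cases h : z k = z j <;> simp [h, hpt_nonneg]) (Finset.mem_univ j)
      simpa using this
    have h3 : load s q f z (z j) ≤ o := by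
      rcases hfin (z j) with h | h <;> rw [h] <;> [exact hoH; exact hoL]
    linarith only [h1, h2, h3]
  -- Nash condition for jobs on H
  have hNEj : ∀ j, x j = H → a ≤ b + ptime s q f L j := by
    intro j hxj
    set y := Function.update x j L with hy
    have hyj : y j = L := Function.update_self j L x
    have hmv : y j ≠ x j := by rw [hyj, hxj]; exact hLH
    obtain ⟨k, hk, hle⟩ := hx y ⟨j, hmv⟩
    have hkj : k = j := by
      by_contra hne
      exact hk (Function.update_of_ne hne L x)
    subst hkj
    rw [hxj, hyj] at hle
    have hyL : load s q f y L = b + ptime s q f L k := by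
      rw [load_eq_sum, hb_def, load_eq_sum]
      have e : ∀ j', (if y j' = L then ptime s q f L j' else 0)
          = (if x j' = L then ptime s q f L j' else 0)
            + (if j' = k then ptime s q f L j' else 0) := by
        intro j'
        by_cases hj' : j' = k
        · subst hj'
          rw [hyj, if_pos rfl, if_pos rfl, if_neg (by rw [hxj]; exact hHL)]
          ring
        · rw [hy, Function.update_of_ne hj', if_neg hj']
          ring
      rw [Finset.sum_congr rfl fun j' _ => e j', Finset.sum_add_distrib]
      congr 1
      rw [Finset.sum_ite_eq' Finset.univ k (fun j' => ptime s q f L j')]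
      simp
    rw [hyL] at hle
    exact hle
  -- b ≤ o
  have hbo : b ≤ o := by
    by_cases hzx : ∃ j, z j ≠ x j
    · obtain ⟨j0, hj0⟩ := hzx
      obtain ⟨k, hk, hle⟩ := hx z ⟨j0, hj0⟩
      have hzk : load s q f z (z k) ≤ o := by
        rcases hfin (z k) with h | h <;> rw [h] <;> [exact hoH; exact hoL]
      rcases hfin (x k) with h | h
      · rw [h] at hle
        exact absurd (le_trans hle hzk) (not_le.mpr hao)
      · rw [h] at hle
        exact le_trans hle hzk
    · push_neg at hzx
      have : z = x := funext hzx
      rw [this] at hopt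
      have : a ≤ o := by
        rw [hopt]; exact hload_le_mk x H
      exact absurd this (not_le.mpr hao)
  -- the key sums
  set pHA := ∑ j, if x j = H ∧ z j = H then ptime s q f H j else 0 with hpHA_def
  set pHB := ∑ j, if x j = H ∧ ¬ z j = H then ptime s q f H j else 0 with hpHB_def
  set pLB := ∑ j, if x j = H ∧ ¬ z j = H then ptime s q f L j else 0 with hpLB_def
  set pLA := ∑ j, if x j = H ∧ z j = H then ptime s q f L j else 0 with hpLA_def
  set pHT := ∑ j, if x j = L ∧ z j = H then ptime s q f H j else 0 with hpHT_def
  set pLR := ∑ j, if x j = L ∧ ¬ z j = H then ptime s q f L j else 0 with hpLR_def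
  set pHL2 := ∑ j, if x j = L then ptime s q f H j else 0 with hpHL2_def
  set pLP := ∑ j, if x j = L ∧ f j = H then ptime s q f L j else 0 with hpLP_def
  set pHP := ∑ j, if x j = L ∧ f j = H then ptime s q f H j else 0 with hpHP_def
  set pLM := ∑ j, if x j = L ∧ ¬ f j = H then ptime s q f L j else 0 with hpLM_def
  set pHM := ∑ j, if x j = L ∧ ¬ f j = H then ptime s q f H j else 0 with hpHM_def
  set pLMT := ∑ j, if (x j = L ∧ ¬ f j = H) ∧ z j = H then ptime s q f L j else 0 with hpLMT_def
  set pLMR := ∑ j, if (x j = L ∧ ¬ f j = H) ∧ ¬ z j = H then ptime s q f L j else 0 with hpLMR_def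
  clear_value pHA pHB pLB pLA pHT pLR pHL2 pLP pHP pLM pHM pLMT pLMR
  have hS1 : a = pHA + pHB := by
    rw [ha_def, load_eq_sum, hpHA_def, hpHB_def]
    exact sum_ite_split (fun j => x j = H) (fun j => z j = H) _
  have hS2 : b = pLP + pLM := by
    rw [hb_def, load_eq_sum, hpLP_def, hpLM_def]
    exact sum_ite_split (fun j => x j = L) (fun j => f j = H) _
  have hS4 : load s q f z H = pHA + pHT := by
    rw [load_eq_sum, hpHA_def, hpHT_def, ← Finset.sum_add_distrib]
    refine Finset.sum_congr rfl fun j _ => ?_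
    rcases hfin (x j) with h | h <;> by_cases hzj : z j = H <;>
      simp [h, hzj, hHL, hLH]
  have hS5 : pHL2 = pHP + pHM := by
    rw [hpHL2_def, hpHP_def, hpHM_def]
    exact sum_ite_split (fun j => x j = L) (fun j => f j = H) _
  have hS6 : pLM = pLMT + pLMR := by
    rw [hpLM_def, hpLMT_def, hpLMR_def]
    exact sum_ite_split (fun j => x j = L ∧ ¬ f j = H) (fun j => z j = H) _
  have hS7 : s * pHP = pLP := by
    rw [hpHP_def, hpLP_def, Finset.mul_sum]
    refine Finset.sum_congr rfl fun j _ => ?_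
    by_cases hc : x j = L ∧ f j = H
    · rw [if_pos hc, if_pos hc, ptime, ptime, if_pos hc.2, if_neg (by rw [hc.2]; exact hHL)]
    · rw [if_neg hc, if_neg hc, mul_zero]
  have hS8 : pHM = s * pLM := by
    rw [hpHM_def, hpLM_def, Finset.mul_sum]
    refine Finset.sum_congr rfl fun j _ => ?_
    by_cases hc : x j = L ∧ ¬ f j = H
    · have hfj : f j = L := (hfin (f j)).resolve_left hc.2
      rw [if_pos hc, if_pos hc, ptime, ptime, if_pos hfj, if_neg (by rw [hfj]; exact hLH)]
    · rw [if_neg hc, if_neg hc, mul_zero]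
  have hS9 : pLA ≤ s * pHA := by
    rw [hpLA_def, hpHA_def, Finset.mul_sum]
    refine Finset.sum_le_sum fun j _ => ?_
    by_cases hc : x j = H ∧ z j = H
    · rw [if_pos hc, if_pos hc]
      rcases hfin (f j) with h | h
      · rw [ptime, ptime, if_pos h, if_neg (by rw [h]; exact hHL)]
      · rw [ptime, ptime, if_pos h, if_neg (by rw [h]; exact hLH)]
        have hss : (1:ℝ) ≤ s * s := by nlinarith [hs1, sq_nonneg (s - 1)]
        calc q j = 1 * q j := by ring
          _ ≤ (s * s) * q j := mul_le_mul_of_nonneg_right hss (hq j).le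
          _ = s * (s * q j) := by ring
    · rw [if_neg hc, if_neg hc, mul_zero]
  have hS10 : s * pLMT ≤ pHT := by
    rw [hpLMT_def, hpHT_def, Finset.mul_sum]
    refine Finset.sum_le_sum fun j _ => ?_
    by_cases hc : (x j = L ∧ ¬ f j = H) ∧ z j = H
    · have hfj : f j = L := (hfin (f j)).resolve_left hc.1.2
      rw [if_pos hc, if_pos ⟨hc.1.1, hc.2⟩, ptime, ptime, if_pos hfj,
        if_neg (by rw [hfj]; exact hLH)]
    · rw [if_neg hc, mul_zero]
      by_cases hc2 : x j = L ∧ z j = H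
      · rw [if_pos hc2]; exact hpt_nonneg _ _
      · rw [if_neg hc2]
  have hS11 : pLMR ≤ pLR := by
    rw [hpLMR_def, hpLR_def]
    refine sum_ite_le_sum_ite _ _ _ _ (fun j => hpt_nonneg _ _) fun j hc => ?_
    exact ⟨⟨hc.1.1, hc.2⟩, le_refl _⟩
  have hpHT0 : 0 ≤ pHT := by
    rw [hpHT_def]; exact sum_ite_nonneg _ _ (fun j => hpt_nonneg _ _)
  have hpHA0 : 0 ≤ pHA := by
    rw [hpHA_def]; exact sum_ite_nonneg _ _ (fun j => hpt_nonneg _ _)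
  have hpHAle : pHA ≤ o := by
    have h1 : pHA + pHT ≤ o := by rw [← hS4]; exact hoH
    linarith only [h1, hpHT0]
  have hpLBle : pLB ≤ o := by
    have h1 : pLB ≤ load s q f z L := by
      rw [load_eq_sum, hpLB_def]
      refine sum_ite_le_sum_ite _ _ _ _ (fun j => hpt_nonneg _ _) fun j hc => ?_
      exact ⟨(hfin (z j)).resolve_left hc.2, le_refl _⟩
    linarith only [h1, hoL]
  -- the unique job j₁ on H that z moves to L
  have hpHBpos : 0 < pHB := by
    have : pHB = a - pHA := by linarith only [hS1]
    rw [this]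
    linarith only [hao, hpHAle]
  have hj₁ex : ∃ j, x j = H ∧ ¬ z j = H := by
    by_contra hne
    push_neg at hne
    have : pHB = 0 := by
      rw [hpHB_def]
      refine Finset.sum_eq_zero fun j _ => ?_
      rw [if_neg]
      rintro ⟨h1, h2⟩
      exact h2 (hne j h1)
    linarith only [this, hpHBpos]
  obtain ⟨j₁, hj₁⟩ := hj₁ex
  have huniq : ∀ j', (x j' = H ∧ ¬ z j' = H) → j' = j₁ := by
    intro j' hj'
    by_contra hne
    have hpair : ptime s q f L j₁ + ptime s q f L j' ≤ pLB := by
      rw [hpLB_def, ← Finset.sum_filter]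
      have hsub : ({j₁, j'} : Finset (Fin n)) ⊆
          Finset.univ.filter (fun j => x j = H ∧ ¬ z j = H) := by
        intro t ht
        rcases Finset.mem_insert.mp ht with h | h
        · subst h; simp [hj₁]
        · rw [Finset.mem_singleton] at h; subst h; simp [hj']
      have := Finset.sum_le_sum_of_subset_of_nonneg hsub
        (fun t _ _ => hpt_nonneg L t)
      rw [Finset.sum_pair (Ne.symm hne)] at this
      exact this
    have h1 := hNEj j₁ hj₁.1
    have h2 := hNEj j' hj'.1
    have h2a : 2 * a ≤ 3 * o := by linarith only [hpLBle, hbo, hpair, h1, h2]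
    linarith only [key, mul_le_mul_of_nonneg_left h2a hs0.le,
      mul_nonneg ho0 (show (0:ℝ) ≤ 2 - s by linarith only [hs2])]
  have hxj₁H : x j₁ = H := hj₁.1
  have hzj₁L : z j₁ = L := (hfin (z j₁)).resolve_left hj₁.2
  have hpHBeq : pHB = ptime s q f H j₁ := by
    rw [hpHB_def]
    have e : ∀ j, (if x j = H ∧ ¬ z j = H then ptime s q f H j else 0)
        = (if j = j₁ then ptime s q f H j else 0) := by
      intro j
      by_cases hj : j = j₁
      · subst hj; rw [if_pos hj₁, if_pos rfl]
      · rw [if_neg hj, if_neg (fun hc => hj (huniq j hc))]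
    rw [Finset.sum_congr rfl fun j _ => e j,
      Finset.sum_ite_eq' Finset.univ j₁ (fun j => ptime s q f H j)]
    simp
  have hpLBeq : pLB = ptime s q f L j₁ := by
    rw [hpLB_def]
    have e : ∀ j, (if x j = H ∧ ¬ z j = H then ptime s q f L j else 0)
        = (if j = j₁ then ptime s q f L j else 0) := by
      intro j
      by_cases hj : j = j₁
      · subst hj; rw [if_pos hj₁, if_pos rfl]
      · rw [if_neg hj, if_neg (fun hc => hj (huniq j hc))]
    rw [Finset.sum_congr rfl fun j _ => e j,
      Finset.sum_ite_eq' Finset.univ j₁ (fun j => ptime s q f L j)]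
    simp
  -- j₁'s favorite machine is L
  have hfav : f j₁ = L := by
    rcases hfin (f j₁) with hfH | hfL
    · exfalso
      have h1 : ptime s q f L j₁ = s * q j₁ := by
        rw [ptime, if_neg (by rw [hfH]; exact hHL)]
      have h2 : ptime s q f H j₁ = q j₁ := by rw [ptime, if_pos hfH]
      have h3 : s * q j₁ ≤ o := by rw [← h1, ← hpLBeq]; exact hpLBle
      have h4 : a - o ≤ q j₁ := by
        rw [← h2, ← hpHBeq]
        linarith only [hS1, hpHAle]
      linarith only [key, h3, mul_le_mul_of_nonneg_left h4 hs0.le]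
    · exact hfL
  have hptHj₁ : ptime s q f H j₁ = s * q j₁ := by
    rw [ptime, if_neg (by rw [hfav]; exact hLH)]
  have hptLj₁ : ptime s q f L j₁ = q j₁ := by rw [ptime, if_pos hfav]
  have hsq₁ : s * q j₁ = a - pHA := by
    rw [← hptHj₁, ← hpHBeq]; linarith only [hS1]
  have hq₁o : q j₁ ≤ o := hqo j₁
  have hNE1 : a ≤ b + q j₁ := by
    have := hNEj j₁ hxj₁H
    rw [hptLj₁] at this
    exact this
  have hq₁0 : 0 < q j₁ := hq j₁
  -- pLR + q j₁ ≤ o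
  have hpLRq : pLR + q j₁ ≤ o := by
    have h1 : pLR + q j₁ ≤ load s q f z L := by
      rw [load_eq_sum, hpLR_def, ← hptLj₁]
      have e2 : (∑ j, if x j = L ∧ ¬ z j = H then ptime s q f L j else 0) + ptime s q f L j₁
          = ∑ j, ((if x j = L ∧ ¬ z j = H then ptime s q f L j else 0)
            + (if j = j₁ then ptime s q f L j else 0)) := by
        rw [Finset.sum_add_distrib,
          Finset.sum_ite_eq' Finset.univ j₁ (fun j => ptime s q f L j)]
        simp
      rw [e2]
      refine Finset.sum_le_sum fun j _ => ?_
      by_cases hj : j = j₁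
      · subst hj
        have hnotL : ¬ (x j = L ∧ ¬ z j = H) := by
          rintro ⟨hc1, -⟩; exact hHL (hxj₁H.symm.trans hc1)
        rw [if_neg hnotL, if_pos rfl, if_pos hzj₁L]
        linarith only []
      · rw [if_neg hj]
        by_cases hc : x j = L ∧ ¬ z j = H
        · rw [if_pos hc, if_pos ((hfin (z j)).resolve_left hc.2)]
          linarith only []
        · rw [if_neg hc]
          by_cases hzj : z j = L
          · rw [if_pos hzj]; linarith only [hpt_nonneg L j]
          · rw [if_neg hzj]; linarith only []
    linarith only [h1, hoL]
  -- F10 : b ≤ pHA + pHT  (SE against the optimum allocation z)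
  have hF10 : b ≤ pHA + pHT := by
    have hmv : z j₁ ≠ x j₁ := by rw [hzj₁L, hxj₁H]; exact hLH
    obtain ⟨k, hk, hle⟩ := hx z ⟨j₁, hmv⟩
    rcases hfin (x k) with hkH | hkL
    · exfalso
      have hzk : ¬ z k = H := by rw [← hkH]; exact hk
      have : k = j₁ := huniq k ⟨hkH, hzk⟩
      subst this
      rw [hkH, hzj₁L] at hle
      exact absurd (le_trans hle hoL) (not_le.mpr hao)
    · have hzk : z k = H := by
        rcases hfin (z k) with h | h
        · exact h
        · exact absurd (h.trans hkL.symm) hk  -- z k = L = x k contradicts hk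
      rw [hkL, hzk] at hle
      rw [← hS4]
      exact hle
  -- main case distinction
  rcases lt_or_ge pHL2 b with hC | hC
  · -- CASE I : moving all of L to H and all of H to L
    set y₃ : Fin n → Fin 2 := fun k => if x k = H then L else H with hy₃
    have hy₃j₁ : y₃ j₁ = L := by rw [hy₃]; exact if_pos hxj₁H
    have hmv : y₃ j₁ ≠ x j₁ := by rw [hy₃j₁, hxj₁H]; exact hLH
    obtain ⟨k, hk, hle⟩ := hx y₃ ⟨j₁, hmv⟩
    rcases hfin (x k) with hkH | hkL
    · -- a ≤ pLA + q j₁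
      have hy₃k : y₃ k = L := by rw [hy₃]; exact if_pos hkH
      rw [hkH, hy₃k] at hle
      have hyL : load s q f y₃ L = pLA + q j₁ := by
        rw [load_eq_sum, hpLA_def, ← hptLj₁]
        have e : ∀ j, (if y₃ j = L then ptime s q f L j else 0)
            = (if x j = H ∧ z j = H then ptime s q f L j else 0)
              + (if j = j₁ then ptime s q f L j else 0) := by
          intro j
          by_cases hj : x j = H
          · have h1 : y₃ j = L := by rw [hy₃]; exact if_pos hj
            by_cases hzj : z j = H
            · have hne : j ≠ j₁ := by
                intro h; subst h; exact hj₁.2 hzj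
              rw [if_pos h1, if_pos ⟨hj, hzj⟩, if_neg hne]; ring
            · have : j = j₁ := huniq j ⟨hj, hzj⟩
              subst this
              rw [if_pos h1, if_neg (fun hc => hzj hc.2), if_pos rfl]; ring
          · have h1 : y₃ j = H := by rw [hy₃]; exact if_neg hj
            have hne : j ≠ j₁ := by intro h; subst h; exact hj hxj₁H
            rw [if_neg (by rw [h1]; exact hHL), if_neg (fun hc => hj hc.1), if_neg hne]; ring
        rw [Finset.sum_congr rfl fun j _ => e j, Finset.sum_add_distrib,
          Finset.sum_ite_eq' Finset.univ j₁ (fun j => ptime s q f L j)]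
        simp
      rw [hyL] at hle
      -- the contradiction chain
      have h1 : a ≤ s * pHA + q j₁ := by linarith only [hle, hS9]
      have h2 : q j₁ ≤ pHA := by
        by_contra hcq
        push_neg at hcq
        linarith only [h1, hsq₁, mul_pos (sub_pos.mpr hs1) (sub_pos.mpr hcq)]
      have h3 : (s - 1) * q j₁ ≤ pHT := by linarith only [hF10, hNE1, hsq₁]
      have h4 : pHA + (s - 1) * q j₁ ≤ o := by
        have h7 : pHA + pHT ≤ o := by rw [← hS4]; exact hoH
        linarith only [h7, h3]
      have h5 : s * q j₁ ≤ o := by linarith only [h2, h4]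
      have h6 : a ≤ o + q j₁ := by linarith only [hsq₁, h4]
      linarith only [key, h5, mul_le_mul_of_nonneg_left h6 hs0.le]
    · -- b ≤ load y₃ H = pHL2 < b : contradiction
      have hy₃k : y₃ k = H := by
        rw [hy₃]; exact if_neg (by rw [hkL]; exact hLH)
      rw [hkL, hy₃k] at hle
      have hyH : load s q f y₃ H = pHL2 := by
        rw [load_eq_sum, hpHL2_def]
        refine Finset.sum_congr rfl fun j _ => ?_
        by_cases hj : x j = H
        · have h1 : y₃ j = L := by rw [hy₃]; exact if_pos hj
          rw [if_neg (by rw [h1]; exact hLH), if_neg (by rw [hj]; exact hHL)]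
        · rw [if_pos (by rw [hy₃]; exact if_neg hj), if_pos ((hfin (x j)).resolve_left hj)]
      rw [hyH] at hle
      linarith only [hle, hC]
  · -- CASE II : b ≤ pHL2
    rcases le_or_gt pLP (b + q j₁ - a) with hA | hB
    · -- Case II.α
      have hL1 : a - q j₁ ≤ pLM := by linarith only [hS2, hA]
      have hpLRub : pLR ≤ o - q j₁ := by linarith only [hpLRq]
      have m2 : pHT ≤ o - pHA := by
        have h7 : pHA + pHT ≤ o := by rw [← hS4]; exact hoH
        linarith only [h7]
      have m5 : s * pLM ≤ pHT + s * pLR := by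
        have hm : s * pLM = s * pLMT + s * pLMR := by rw [hS6]; ring
        linarith only [hm, hS10, mul_le_mul_of_nonneg_left hS11 hs0.le]
      linarith only [key, m5, m2, hpHA0,
        mul_le_mul_of_nonneg_left hL1 hs0.le,
        mul_le_mul_of_nonneg_left hpLRub hs0.le]
    · -- Case II.β
      set y₄ : Fin n → Fin 2 := fun k =>
        if x k = L ∧ f k = H then H else if k = j₁ then L else x k with hy₄
      have hn₁ : ¬ (x j₁ = L ∧ f j₁ = H) := by
        rintro ⟨hc1, -⟩; exact hHL (hxj₁H.symm.trans hc1)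
      have hy₄j₁ : y₄ j₁ = L := by
        show (if x j₁ = L ∧ f j₁ = H then H else if j₁ = j₁ then L else x j₁) = L
        rw [if_neg hn₁, if_pos rfl]
      have hmv : y₄ j₁ ≠ x j₁ := by rw [hy₄j₁, hxj₁H]; exact hLH
      obtain ⟨k, hk, hle⟩ := hx y₄ ⟨j₁, hmv⟩
      by_cases hc : x k = L ∧ f k = H
      · -- b ≤ pHA + pHP
        have hy₄k : y₄ k = H := by rw [hy₄]; exact if_pos hc
        rw [hc.1, hy₄k] at hle
        have hyH : load s q f y₄ H + s * q j₁ = a + pHP := by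
          rw [load_eq_sum, ha_def, load_eq_sum, hpHP_def, ← hptHj₁]
          have e : ∀ j, (if y₄ j = H then ptime s q f H j else 0)
              + (if j = j₁ then ptime s q f H j else 0)
              = (if x j = H then ptime s q f H j else 0)
                + (if x j = L ∧ f j = H then ptime s q f H j else 0) := by
            intro j
            by_cases hcj : x j = L ∧ f j = H
            · have h1 : y₄ j = H := by rw [hy₄]; exact if_pos hcj
              have hne : j ≠ j₁ := by
                intro h; subst h; exact hHL (hxj₁H ▸ hcj.1 ▸ rfl : H = L)
              rw [if_pos h1, if_neg hne, if_neg (by rw [hcj.1]; exact hLH), if_pos hcj]; ring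
            · by_cases hj : j = j₁
              · subst hj
                have h1 : y₄ j = L := hy₄j₁
                rw [if_neg (by rw [h1]; exact hLH), if_pos rfl, if_pos hxj₁H, if_neg hcj]; ring
              · have h1 : y₄ j = x j := by
                  rw [hy₄]; simp only; rw [if_neg hcj, if_neg hj]
                rw [h1, if_neg hj, if_neg hcj]
          calc (∑ j, if y₄ j = H then ptime s q f H j else 0) + ptime s q f H j₁
              = ∑ j, ((if y₄ j = H then ptime s q f H j else 0)
                + (if j = j₁ then ptime s q f H j else 0)) := by
                rw [Finset.sum_add_distrib,
                  Finset.sum_ite_eq' Finset.univ j₁ (fun j => ptime s q f H j)]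
                simp
            _ = ∑ j, ((if x j = H then ptime s q f H j else 0)
                + (if x j = L ∧ f j = H then ptime s q f H j else 0)) := by
                exact Finset.sum_congr rfl fun j _ => e j
            _ = _ := by rw [Finset.sum_add_distrib]
        have hB2 : b ≤ pHA + pHP := by
          have : load s q f y₄ H = a + pHP - s * q j₁ := by linarith only [hyH]
          rw [this] at hle
          linarith only [hle, hsq₁]
        -- contradiction chain of Case II.β
        have hsb : s * b = s * pLP + s * pLM := by rw [hS2]; ring
        have d1 : s * pLP + s * pLM ≤ pLP + s * (s * pLM) := by
          have := mul_le_mul_of_nonneg_left hC hs0.le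
          rw [hS5, hS8] at this
          linarith only [hS7, this, hsb]
        have c2 : pLP ≤ s * pLM := by
          by_contra h
          push_neg at h
          linarith only [d1, mul_pos (sub_pos.mpr hs1) (sub_pos.mpr h)]
        have c3 : s * (b - pHA) ≤ pLP := by
          have h1 : b - pHA ≤ pHP := by linarith only [hB2]
          have := mul_le_mul_of_nonneg_left h1 hs0.le
          linarith only [hS7, this]
        have c4 : pLP ≤ pHA := by
          have h1 : s * pLP ≤ s * pHA := by linarith only [c2, c3, hsb]
          exact le_of_mul_le_mul_left h1 hs0
        have c5 : (s - 1) * q j₁ ≤ b - pHA := by linarith only [hNE1, hsq₁]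
        have c6 : s * ((s - 1) * q j₁) ≤ pHA := by
          have := mul_le_mul_of_nonneg_left c5 hs0.le
          linarith only [c3, c4, this]
        have c7 : pHA + (s - 1) * q j₁ ≤ o := by
          have h1 : pHA + pHT ≤ o := by rw [← hS4]; exact hoH
          have h2 : (s - 1) * q j₁ ≤ pHT := by linarith only [hF10, c5]
          linarith only [h1, h2]
        have c8 : s * q j₁ ≤ o := by
          linarith only [c6, c7,
            mul_nonneg (show (0:ℝ) ≤ s^2 - 1 - s by linarith only [hphi]) hq₁0.le]
        have c9 : a ≤ o + q j₁ := by linarith only [hsq₁, c7]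
        linarith only [key, c8, mul_le_mul_of_nonneg_left c9 hs0.le]
      · -- k must be j₁, and then j₁ improves : contradiction with hB
        have hkj₁ : k = j₁ := by
          by_contra hne
          apply hk
          rw [hy₄]; simp only; rw [if_neg hc, if_neg hne]
        rw [hkj₁] at hle
        rw [hxj₁H, hy₄j₁] at hle
        have hyL : load s q f y₄ L + pLP = b + q j₁ := by
          rw [load_eq_sum, hb_def, load_eq_sum, hpLP_def, ← hptLj₁]
          have e : ∀ j, (if y₄ j = L then ptime s q f L j else 0)
              + (if x j = L ∧ f j = H then ptime s q f L j else 0)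
              = (if x j = L then ptime s q f L j else 0)
                + (if j = j₁ then ptime s q f L j else 0) := by
            intro j
            by_cases hcj : x j = L ∧ f j = H
            · have h1 : y₄ j = H := by rw [hy₄]; exact if_pos hcj
              have hne : j ≠ j₁ := by
                intro h; subst h; exact hHL (hxj₁H ▸ hcj.1 ▸ rfl : H = L)
              rw [if_neg (by rw [h1]; exact hHL), if_pos hcj, if_pos hcj.1, if_neg hne]; ring
            · by_cases hj : j = j₁
              · subst hj
                simp [hy₄j₁, hcj, hxj₁H, hLH, hHL]
              · have h1 : y₄ j = x j := by
                  rw [hy₄]; simp only; rw [if_neg hcj, if_neg hj]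
                rw [h1, if_neg hcj, if_neg hj]
          calc (∑ j, if y₄ j = L then ptime s q f L j else 0)
              + (∑ j, if x j = L ∧ f j = H then ptime s q f L j else 0)
              = ∑ j, ((if y₄ j = L then ptime s q f L j else 0)
                + (if x j = L ∧ f j = H then ptime s q f L j else 0)) := by
                rw [Finset.sum_add_distrib]
            _ = ∑ j, ((if x j = L then ptime s q f L j else 0)
                + (if j = j₁ then ptime s q f L j else 0)) := by
                exact Finset.sum_congr rfl fun j _ => e j
            _ = _ := by
                rw [Finset.sum_add_distrib,
                  Finset.sum_ite_eq' Finset.univ j₁ (fun j => ptime s q f L j)]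
                simp
        have : load s q f y₄ L = b + q j₁ - pLP := by linarith only [hyL]
        rw [this] at hle
        linarith only [hle, hB]

theorem spoa_upper_interval3
    (s₃ : ℝ) (hs₃lo : 1 < s₃) (hs₃hi : s₃ < 2)
    (hs₃root : s₃^3 - 2*s₃^2 + s₃ - 1 = 0)
    (s : ℝ) (hs : (1 + Real.sqrt 5)/2 ≤ s) (hs' : s ≤ s₃)
    {n : ℕ} (q : Fin n → ℝ) (hq : ∀ j, 0 < q j)
    (f : Fin n → Fin 2) (x : Fin n → Fin 2) (hx : IsSE s q f x) :
    makespan s q f x ≤ ((s + 1)/s) * optMakespan s q f := by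
  have h5 : (2:ℝ) ≤ Real.sqrt 5 := by
    nlinarith [Real.sq_sqrt (show (0:ℝ) ≤ 5 by norm_num), Real.sqrt_nonneg 5]
  have hs1 : 1 < s := by linarith
  have hs2 : s < 2 := lt_of_le_of_lt hs' hs₃hi
  have hphi : s + 1 ≤ s^2 := by
    have e1 : 0 ≤ 2*s - 1 - Real.sqrt 5 := by linarith
    have e2 : 0 ≤ 2*s - 1 + Real.sqrt 5 := by linarith [Real.sqrt_nonneg 5]
    nlinarith [mul_nonneg e1 e2, Real.sq_sqrt (show (0:ℝ) ≤ 5 by norm_num)]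
  rcases le_total (load s q f x 1) (load s q f x 0) with h | h
  · have hm := main_bound s hs1 hs2 hphi q hq f x hx 0 1 (by decide) h
    have : makespan s q f x = load s q f x 0 := max_eq_left h
    rw [this]
    exact hm
  · have hm := main_bound s hs1 hs2 hphi q hq f x hx 1 0 (by decide) h
    have : makespan s q f x = load s q f x 1 := max_eq_right h
    rw [this]
    exact hm
end

section
/- Let s₇ ≈ 2.247 be the unique root in the interval (2,3) of s³ − 2s² − s + 1 = 0. For every real s with s ≥ s₇, every instance of the favorite-machine scheduling game on two machines with parameter s, and every allocation x that is a strong equilibrium, the makespan of x is at most (s + 1)/s times the optimal makespan. -/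
open Finset

lemma fin2_cases (i a b : Fin 2) (hab : a ≠ b) : i = a ∨ i = b := by
  revert i a b; decide

lemma load_nonneg (s : ℝ) (hs : 0 ≤ s) {n : ℕ} (q : Fin n → ℝ) (hq : ∀ j, 0 < q j)
    (f : Fin n → Fin 2) (x : Fin n → Fin 2) (i : Fin 2) : 0 ≤ load s q f x i :=
  Finset.sum_nonneg fun j _ => by
    unfold ptime; split_ifs
    exacts [(hq j).le, mul_nonneg hs (hq j).le]

lemma key_lemma (s : ℝ) (hs2 : 2 ≤ s) {n : ℕ} (q : Fin n → ℝ) (hq : ∀ j, 0 < q j)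
    (f : Fin n → Fin 2) (x : Fin n → Fin 2) (hx : IsSE s q f x)
    (y : Fin n → Fin 2) (a b : Fin 2) (hab : a ≠ b) :
    load s q f x a ≤ (1 + 1/s) * makespan s q f y := by
  have hs0 : (0:ℝ) < s := by linarith
  have hpt : ∀ (i : Fin 2) j, 0 ≤ ptime s q f i j := fun i j => by
    unfold ptime; split_ifs; exacts [(hq j).le, mul_nonneg hs0.le (hq j).le]
  set M := makespan s q f y with hM
  have hMi : ∀ i : Fin 2, load s q f y i ≤ M := by
    intro i
    rcases fin2_cases i 0 1 (by decide) with h | h <;> subst h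
    · exact le_max_left _ _
    · exact le_max_right _ _
  have hM0 : 0 ≤ M := le_trans (load_nonneg s hs0.le q hq f y 0) (hMi 0)
  have hgoal : (1 + 1/s) * M = M + M/s := by ring
  rw [hgoal]
  have hMs0 : 0 ≤ M / s := div_nonneg hM0 hs0.le
  by_cases hCM : load s q f x a ≤ M
  · linarith
  push_neg at hCM
  -- Step 1 : L ≤ M
  have hLM : load s q f x b ≤ M := by
    by_cases hxy : ∀ j, y j = x j
    · exfalso
      have hyx : y = x := funext hxy
      have := hMi a
      rw [hyx] at this
      linarith
    · push_neg at hxy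
      obtain ⟨j0, hj0, hle0⟩ := hx y hxy
      have hyj : load s q f y (y j0) ≤ M := hMi _
      rcases fin2_cases (x j0) a b hab with h | h
      · rw [h] at hle0; linarith
      · rw [h] at hle0; linarith
  have hload : ∀ (z : Fin n → Fin 2) (i : Fin 2),
      load s q f z i = ∑ j, if z j = i then ptime s q f i j else 0 :=
    fun z i => Finset.sum_filter _ _
  -- Step 2 : case analysis on existence of j* (on a in x, on b in y, favorite b)
  by_cases hG : ∃ j, x j = a ∧ y j = b ∧ f j = b
  case neg =>
    -- C ≤ ℓ_a(y) + Φ  and  s·Φ ≤ ℓ_b(y)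
    have H1 : load s q f x a ≤ load s q f y a +
        (∑ j, if x j = a ∧ y j = b ∧ f j = a then q j else 0) := by
      rw [hload, hload, ← Finset.sum_add_distrib]
      refine Finset.sum_le_sum fun j _ => ?_
      rcases fin2_cases (x j) a b hab with h1 | h1 <;>
        rcases fin2_cases (y j) a b hab with h2 | h2 <;>
          rcases fin2_cases (f j) a b hab with h3 | h3 <;>
            simp [h1, h2, h3, hab, Ne.symm hab, ptime] <;>
              first
                | nlinarith [hpt a j, hpt b j, hq j, hs0.le]
                | exact absurd ⟨j, h1, h2, h3⟩ hG
    have H2 : s * (∑ j, if x j = a ∧ y j = b ∧ f j = a then q j else 0)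
        ≤ load s q f y b := by
      rw [hload, Finset.mul_sum]
      refine Finset.sum_le_sum fun j _ => ?_
      by_cases h : x j = a ∧ y j = b ∧ f j = a
      · obtain ⟨h1, h2, h3⟩ := h
        simp [h1, h2, h3, hab, Ne.symm hab, ptime]
      · rw [if_neg h, mul_zero]
        split_ifs
        exacts [hpt b j, le_refl 0]
    have hΦ : (∑ j, if x j = a ∧ y j = b ∧ f j = a then q j else 0) ≤ M / s := by
      rw [le_div_iff₀ hs0]
      have := hMi b
      nlinarith
    have := hMi a
    linarith
  case pos =>
    obtain ⟨jstar, hxj, hyj, hfj⟩ := hG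
    -- NE for j*
    have H_NE : load s q f x a ≤ load s q f x b + q jstar := by
      set z' : Fin n → Fin 2 := fun j => if j = jstar then b else x j with hz'def
      have hz'1 : z' jstar = b := by simp [hz'def]
      have hz'O : ∀ j, j ≠ jstar → z' j = x j := fun j h => by simp [hz'def, h]
      obtain ⟨j0, hj0ne, hj0le⟩ := hx z' ⟨jstar, by rw [hz'1, hxj]; exact Ne.symm hab⟩
      have hj0 : j0 = jstar := by
        by_contra h; exact hj0ne (hz'O j0 h)
      rw [hj0] at hj0le
      rw [hxj, hz'1] at hj0le
      have I6 : load s q f z' b = load s q f x b + q jstar := by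
        rw [hload, hload]
        have hqs : (∑ j, if j = jstar then q j else 0) = q jstar := by simp
        rw [← hqs, ← Finset.sum_add_distrib]
        refine Finset.sum_congr rfl fun j _ => ?_
        by_cases h1 : j = jstar
        · subst h1
          rw [hz'1]
          simp [hxj, hfj, hab, Ne.symm hab, ptime]
        · rw [hz'O j h1]
          simp [h1]
      rw [I6] at hj0le
      exact hj0le
    -- coalition deviation z : jstar → b, all (x=b,y=a,f=a) jobs → a
    set z : Fin n → Fin 2 := fun j =>
      if j = jstar then b else if x j = b ∧ y j = a ∧ f j = a then a else x j with hzdef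
    have hz1 : z jstar = b := by simp [hzdef]
    have hzF : ∀ j, j ≠ jstar → (x j = b ∧ y j = a ∧ f j = a) → z j = a := by
      intro j h1 h2; simp [hzdef, h1, h2]
    have hzO : ∀ j, j ≠ jstar → ¬(x j = b ∧ y j = a ∧ f j = a) → z j = x j := by
      intro j h1 h2; simp [hzdef, h1, h2]
    -- identity I4 : ℓ_b(z) + s·U = ℓ_b(x) + q jstar
    have I4 : load s q f z b + s * (∑ j, if x j = b ∧ y j = a ∧ f j = a then q j else 0)
        = load s q f x b + q jstar := by
      rw [hload, hload, Finset.mul_sum]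
      have hqs : (∑ j, if j = jstar then q j else 0) = q jstar := by simp
      rw [← hqs, ← Finset.sum_add_distrib, ← Finset.sum_add_distrib]
      refine Finset.sum_congr rfl fun j _ => ?_
      by_cases h1 : j = jstar
      · subst h1
        rw [hz1]
        simp [hxj, hfj, hab, Ne.symm hab, ptime]
      · by_cases h2 : x j = b ∧ y j = a ∧ f j = a
        · obtain ⟨g1, g2, g3⟩ := h2
          rw [hzF j h1 ⟨g1, g2, g3⟩]
          simp [g1, g2, g3, h1, hab, Ne.symm hab, ptime]
        · rw [hzO j h1 h2]
          simp [h1, h2]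
    -- identity I5 : ℓ_a(z) + s·(q jstar) = ℓ_a(x) + U
    have I5 : load s q f z a + s * q jstar
        = load s q f x a + (∑ j, if x j = b ∧ y j = a ∧ f j = a then q j else 0) := by
      rw [hload, hload]
      have hqs : s * q jstar = ∑ j, if j = jstar then s * q j else 0 := by simp
      rw [hqs, ← Finset.sum_add_distrib, ← Finset.sum_add_distrib]
      refine Finset.sum_congr rfl fun j _ => ?_
      by_cases h1 : j = jstar
      · subst h1
        rw [hz1]
        simp [hxj, hfj, hab, Ne.symm hab, ptime]
      · by_cases h2 : x j = b ∧ y j = a ∧ f j = a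
        · obtain ⟨g1, g2, g3⟩ := h2
          rw [hzF j h1 ⟨g1, g2, g3⟩]
          simp [g1, g2, g3, h1, hab, Ne.symm hab, ptime]
        · rw [hzO j h1 h2]
          simp [h1, h2]
    -- identity H6 : ℓ_b(y) + s·U + V = ℓ_b(x) + s·Φ + Γ
    have H6 : load s q f y b + s * (∑ j, if x j = b ∧ y j = a ∧ f j = a then q j else 0)
          + (∑ j, if x j = b ∧ y j = a ∧ f j = b then q j else 0)
        = load s q f x b + s * (∑ j, if x j = a ∧ y j = b ∧ f j = a then q j else 0)
          + (∑ j, if x j = a ∧ y j = b ∧ f j = b then q j else 0) := by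
      rw [hload, hload, Finset.mul_sum, Finset.mul_sum,
        ← Finset.sum_add_distrib, ← Finset.sum_add_distrib,
        ← Finset.sum_add_distrib, ← Finset.sum_add_distrib]
      refine Finset.sum_congr rfl fun j _ => ?_
      rcases fin2_cases (x j) a b hab with h1 | h1 <;>
        rcases fin2_cases (y j) a b hab with h2 | h2 <;>
          rcases fin2_cases (f j) a b hab with h3 | h3 <;>
            simp [h1, h2, h3, hab, Ne.symm hab, ptime] <;> ring
    -- H7 : q jstar ≤ Γ
    have H7 : q jstar ≤ ∑ j, if x j = a ∧ y j = b ∧ f j = b then q j else 0 := by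
      have h := Finset.single_le_sum
        (f := fun j => if x j = a ∧ y j = b ∧ f j = b then q j else 0)
        (fun j _ => by split_ifs; exacts [(hq j).le, le_refl 0])
        (Finset.mem_univ jstar)
      simpa [hxj, hyj, hfj] using h
    -- H9 : s·V ≤ ℓ_a(y)
    have H9 : s * (∑ j, if x j = b ∧ y j = a ∧ f j = b then q j else 0)
        ≤ load s q f y a := by
      rw [hload, Finset.mul_sum]
      refine Finset.sum_le_sum fun j _ => ?_
      by_cases h : x j = b ∧ y j = a ∧ f j = b
      · obtain ⟨h1, h2, h3⟩ := h
        simp [h1, h2, h3, hab, Ne.symm hab, ptime]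
      · rw [if_neg h, mul_zero]
        split_ifs
        exacts [hpt a j, le_refl 0]
    -- H10 : s·U ≤ ℓ_b(x)
    have H10 : s * (∑ j, if x j = b ∧ y j = a ∧ f j = a then q j else 0)
        ≤ load s q f x b := by
      rw [hload, Finset.mul_sum]
      refine Finset.sum_le_sum fun j _ => ?_
      by_cases h : x j = b ∧ y j = a ∧ f j = a
      · obtain ⟨h1, h2, h3⟩ := h
        simp [h1, h2, h3, hab, Ne.symm hab, ptime]
      · rw [if_neg h, mul_zero]
        split_ifs
        exacts [hpt b j, le_refl 0]
    have H8Φ : 0 ≤ ∑ j, if x j = a ∧ y j = b ∧ f j = a then q j else 0 :=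
      Finset.sum_nonneg fun j _ => by split_ifs; exacts [(hq j).le, le_refl 0]
    have H8U : 0 ≤ ∑ j, if x j = b ∧ y j = a ∧ f j = a then q j else 0 :=
      Finset.sum_nonneg fun j _ => by split_ifs; exacts [(hq j).le, le_refl 0]
    -- SE applied to z
    obtain ⟨j1, hj1ne, hj1le⟩ := hx z ⟨jstar, by rw [hz1, hxj]; exact Ne.symm hab⟩
    have hdev : j1 = jstar ∨ (x j1 = b ∧ y j1 = a ∧ f j1 = a) := by
      by_cases h1 : j1 = jstar
      · exact Or.inl h1
      · by_cases h2 : x j1 = b ∧ y j1 = a ∧ f j1 = a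
        · exact Or.inr h2
        · exact absurd (hzO j1 h1 h2) hj1ne
    rcases hdev with hj1 | ⟨g1, g2, g3⟩
    · -- case (A) : C ≤ ℓ_b(z)
      subst hj1
      rw [hxj, hz1] at hj1le
      have hsΦ : 0 ≤ s * (∑ j, if x j = a ∧ y j = b ∧ f j = a then q j else 0) :=
        mul_nonneg hs0.le H8Φ
      have hV : (∑ j, if x j = b ∧ y j = a ∧ f j = b then q j else 0) ≤ M / s := by
        rw [le_div_iff₀ hs0]
        have := hMi a
        nlinarith
      have := hMi b
      linarith
    · -- case (B) : L ≤ ℓ_a(z)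
      have hj1js : j1 ≠ jstar := by
        intro h
        rw [h, hxj] at g1
        exact hab g1
      rw [g1, hzF j1 hj1js ⟨g1, g2, g3⟩] at hj1le
      -- abbreviations
      set C := load s q f x a
      set L := load s q f x b
      set U := ∑ j, if x j = b ∧ y j = a ∧ f j = a then q j else 0
      have h1 : s * q jstar ≤ (C - L) + U := by linarith
      have h2 : C - L ≤ q jstar := by linarith
      have h3 : (0:ℝ) ≤ C - L := by linarith
      have h4 : s * (C - L) ≤ s * q jstar := mul_le_mul_of_nonneg_left h2 hs0.le
      have h5 : s * (C - L) - (C - L) ≤ U := by linarith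
      have h6 : s * (s * (C - L) - (C - L)) ≤ s * U :=
        mul_le_mul_of_nonneg_left h5 hs0.le
      have h7 : s * (s * (C - L) - (C - L)) ≤ M := by linarith
      have h8 : s * (C - L) ≤ s * (s * (C - L) - (C - L)) := by
        nlinarith [mul_nonneg (mul_nonneg hs0.le h3) (by linarith : (0:ℝ) ≤ s - 2)]
      have h9 : (C - L) ≤ M / s := by
        rw [le_div_iff₀ hs0]
        nlinarith
      linarith

theorem spoa_upper_interval8
    (s₇ : ℝ) (hs₇lo : 2 < s₇) (hs₇hi : s₇ < 3)
    (hs₇root : s₇^3 - 2*s₇^2 - s₇ + 1 = 0)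
    (s : ℝ) (hs : s₇ ≤ s)
    {n : ℕ} (q : Fin n → ℝ) (hq : ∀ j, 0 < q j)
    (f : Fin n → Fin 2) (x : Fin n → Fin 2) (hx : IsSE s q f x) :
    makespan s q f x ≤ ((s + 1)/s) * optMakespan s q f := by
  have hs2 : (2:ℝ) ≤ s := by linarith
  have hs0 : (0:ℝ) < s := by linarith
  have hkey : ∀ y, makespan s q f x ≤ (1 + 1/s) * makespan s q f y := fun y =>
    max_le (key_lemma s hs2 q hq f x hx y 0 1 (by decide))
      (key_lemma s hs2 q hq f x hx y 1 0 (by decide))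
  have hc : 0 < (s+1)/s := by positivity
  have heq : (s+1)/s = 1 + 1/s := by field_simp
  have hinf : makespan s q f x / ((s+1)/s) ≤ optMakespan s q f := by
    apply le_ciInf
    intro y
    rw [div_le_iff₀ hc, heq, mul_comm]
    exact hkey y
  have h2 := (div_le_iff₀ hc).mp hinf
  rw [mul_comm] at h2
  exact h2
end

section
/- Let s₁ ≈ 1.325 be the unique root in the interval (1,2) of s⁴ + s³ − s² − 2s − 1 = 0. Fix a real s with s₁ ≤ s ≤ (1 + √5)/2 and consider the instance of the favorite-machine scheduling game on two machines with parameter s consisting of four jobs: A of size (s + 1)/(2s + 1) with favorite machine 2; B of size s/(2s + 1) with favorite machine 1; C of size (s + 1)/(2s + 1) with favorite machine 1; and E of size s/(2s + 1) with favorite machine 2. Then the allocation assigning A and C to machine 1 and B and E to machine 2 is a strong equilibrium whose makespan equals (s² + 2s + 1)/(2s + 1), while the optimal makespan of this instance is at most 1. Consequently, the strong price of anarchy at parameter s is at least (s² + 2s + 1)/(2s + 1). -/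
open Finset

lemma load_eq4 (s : ℝ) (q : Fin 4 → ℝ) (f : Fin 4 → Fin 2)
    (x : Fin 4 → Fin 2) (i : Fin 2) :
    load s q f x i = (if x 0 = i then ptime s q f i 0 else 0)
      + (if x 1 = i then ptime s q f i 1 else 0)
      + (if x 2 = i then ptime s q f i 2 else 0)
      + (if x 3 = i then ptime s q f i 3 else 0) := by
  rw [load, Finset.sum_filter, Fin.sum_univ_four]

set_option maxHeartbeats 2000000 in
theorem spoa_lower_interval2
    (s₁ : ℝ) (hs₁lo : 1 < s₁) (hs₁hi : s₁ < 2)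
    (hs₁root : s₁^4 + s₁^3 - s₁^2 - 2*s₁ - 1 = 0)
    (s : ℝ) (hs : s₁ ≤ s) (hs' : s ≤ (1 + Real.sqrt 5)/2)
    (q : Fin 4 → ℝ) (hq : q = ![(s + 1)/(2*s + 1), s/(2*s + 1), (s + 1)/(2*s + 1), s/(2*s + 1)])
    (f : Fin 4 → Fin 2) (hf : f = ![1, 0, 0, 1])
    (x : Fin 4 → Fin 2) (hx : x = ![0, 1, 0, 1]) :
    IsSE s q f x ∧
      makespan s q f x = (s^2 + 2*s + 1)/(2*s + 1) ∧
      optMakespan s q f ≤ 1 ∧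
      ((s^2 + 2*s + 1)/(2*s + 1)) * optMakespan s q f ≤ makespan s q f x := by
  subst hq hf hx
  have hs1 : 1 < s := lt_of_lt_of_le hs₁lo hs
  have h5 : Real.sqrt 5 ^ 2 = 5 := Real.sq_sqrt (by norm_num)
  have h5n : 0 ≤ Real.sqrt 5 := Real.sqrt_nonneg 5
  have hgold : s^2 ≤ s + 1 := by
    nlinarith [mul_nonneg (sub_nonneg.mpr hs')
      (show (0:ℝ) ≤ s - (1 - Real.sqrt 5)/2 by nlinarith)]
  have hd : (0:ℝ) < 2*s + 1 := by linarith
  have htwo : ∀ i : Fin 2, i = 0 ∨ i = 1 := by decide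
  have hmk : makespan s ![(s + 1)/(2*s + 1), s/(2*s + 1), (s + 1)/(2*s + 1), s/(2*s + 1)]
      ![1,0,0,1] ![0,1,0,1] = (s^2 + 2*s + 1)/(2*s + 1) := by
    rw [makespan, load_eq4, load_eq4]
    simp [ptime]
    rw [max_eq_left]
    · field_simp; ring
    · field_simp; nlinarith
  have hopt : optMakespan s
      ![(s + 1)/(2*s + 1), s/(2*s + 1), (s + 1)/(2*s + 1), s/(2*s + 1)] ![1,0,0,1] ≤ 1 := by
    set q : Fin 4 → ℝ := ![(s + 1)/(2*s + 1), s/(2*s + 1), (s + 1)/(2*s + 1), s/(2*s + 1)]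
      with hqq
    have hq0 : ∀ j : Fin 4, 0 ≤ q j := by
      intro j; fin_cases j <;> simp [hqq] <;> apply div_nonneg <;> linarith
    have hb : BddBelow (Set.range fun y : Fin 4 → Fin 2 => makespan s q ![1,0,0,1] y) := by
      refine ⟨0, ?_⟩
      rintro _ ⟨y, rfl⟩
      refine le_trans ?_ (le_max_left _ _)
      refine Finset.sum_nonneg fun j _ => ?_
      unfold ptime; split
      · exact hq0 j
      · exact mul_nonneg (by linarith) (hq0 j)
    refine ciInf_le_of_le hb ![1,0,0,1] ?_
    rw [makespan, load_eq4, load_eq4]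
    simp [ptime, hqq]
    constructor <;> · rw [← add_div, div_le_one hd]; linarith
  refine ⟨?_, hmk, hopt, ?_⟩
  · intro y hy
    rcases htwo (y 0) with h0 | h0 <;> rcases htwo (y 1) with h1 | h1 <;>
      rcases htwo (y 2) with h2 | h2 <;> rcases htwo (y 3) with h3 | h3 <;>
      first
      | (refine ⟨0, by rw [h0]; decide, ?_⟩
         rw [load_eq4, load_eq4]
         simp [h0, h1, h2, h3, ptime]
         field_simp
         nlinarith [hgold, hs1])
      | (refine ⟨1, by rw [h1]; decide, ?_⟩
         rw [load_eq4, load_eq4]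
         simp [h0, h1, h2, h3, ptime]
         field_simp
         nlinarith [hgold, hs1])
      | (refine ⟨3, by rw [h3]; decide, ?_⟩
         rw [load_eq4, load_eq4]
         simp [h0, h1, h2, h3, ptime]
         field_simp
         nlinarith [hgold, hs1])
      | (refine ⟨2, by rw [h2]; decide, ?_⟩
         rw [load_eq4, load_eq4]
         simp [h0, h1, h2, h3, ptime]
         field_simp
         nlinarith [hgold, hs1])
      | (obtain ⟨j, hj⟩ := hy; exact absurd (by fin_cases j <;> simp [h0, h1, h2, h3]) hj)
  · have hc : (0:ℝ) ≤ (s^2 + 2*s + 1)/(2*s + 1) := div_nonneg (by nlinarith) (by linarith)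
    calc (s^2 + 2*s + 1)/(2*s + 1) * optMakespan s
          ![(s + 1)/(2*s + 1), s/(2*s + 1), (s + 1)/(2*s + 1), s/(2*s + 1)] ![1,0,0,1]
        ≤ (s^2 + 2*s + 1)/(2*s + 1) * 1 := mul_le_mul_of_nonneg_left hopt hc
      _ = (s^2 + 2*s + 1)/(2*s + 1) := mul_one _
      _ = _ := hmk.symm
end

section
/- Let s₃ ≈ 1.755 be the unique root in the interval (1,2) of s³ − 2s² + s − 1 = 0. Fix a real s with (1 + √5)/2 ≤ s ≤ s₃ and consider the instance of the favorite-machine scheduling game on two machines with parameter s consisting of four jobs: A of size 1/s with favorite machine 2; B of size (s − 1)/s with favorite machine 1; C of size 1/s with favorite machine 1; and E of size 2 − s with favorite machine 2. Then the allocation assigning A and C to machine 1 and B and E to machine 2 is a strong equilibrium whose makespan equals (s + 1)/s, while the optimal makespan of this instance is at most 1. Consequently, the strong price of anarchy at parameter s is at least (s + 1)/s. -/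
open Finset

lemma fin2 (a : Fin 2) : a = 0 ∨ a = 1 := by omega

lemma load_eq (s : ℝ) (q : Fin 4 → ℝ) (f : Fin 4 → Fin 2) (z : Fin 4 → Fin 2) (i : Fin 2) :
    load s q f z i = ∑ j : Fin 4, if z j = i then ptime s q f i j else 0 := by
  rw [load, Finset.sum_filter]

set_option maxHeartbeats 4000000 in
theorem spoa_lower_interval3
    (s₃ : ℝ) (hs₃lo : 1 < s₃) (hs₃hi : s₃ < 2)
    (hs₃root : s₃^3 - 2*s₃^2 + s₃ - 1 = 0)
    (s : ℝ) (hs : (1 + Real.sqrt 5)/2 ≤ s) (hs' : s ≤ s₃)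
    (q : Fin 4 → ℝ) (hq : q = ![1/s, (s - 1)/s, 1/s, 2 - s])
    (f : Fin 4 → Fin 2) (hf : f = ![1, 0, 0, 1])
    (x : Fin 4 → Fin 2) (hx : x = ![0, 1, 0, 1]) :
    IsSE s q f x ∧
      makespan s q f x = (s + 1)/s ∧
      optMakespan s q f ≤ 1 ∧
      ((s + 1)/s) * optMakespan s q f ≤ makespan s q f x := by
  subst hq hf hx
  have h5 : Real.sqrt 5 ^ 2 = 5 := Real.sq_sqrt (by norm_num)
  have h5n : (0:ℝ) ≤ Real.sqrt 5 := Real.sqrt_nonneg 5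
  have hs1 : 1 < s := by nlinarith
  have hs2 : s < 2 := lt_of_le_of_lt hs' hs₃hi
  have hs0 : 0 < s := by linarith
  have hφ : s + 1 ≤ s^2 := by nlinarith
  have hq1 : 0 ≤ (s₃-1)^2 + (s-1)^2 + (s₃*s - 1) := by
    nlinarith [mul_pos (sub_pos.mpr hs₃lo) (sub_pos.mpr hs1)]
  have hcub : s^3 - 2*s^2 + s - 1 ≤ 0 := by
    nlinarith [mul_nonneg (sub_nonneg.mpr hs') hq1]
  have e1 : s * s⁻¹ = 1 := mul_inv_cancel₀ hs0.ne'
  have e2 : (s-1)/s = 1 - s⁻¹ := by field_simp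
  have e3 : s * ((s-1)/s) = s - 1 := by field_simp
  have e4 : 0 < s⁻¹ := by positivity
  have e5 : s⁻¹ ≤ 1 := by rw [inv_le_one_iff₀]; right; exact hs1.le
  have hc' : (1:ℝ) ≤ s⁻¹ + (2*s - s^2) := by
    rw [← sub_nonneg]
    have e : s⁻¹ + (2*s - s^2) - 1 = (-(s^3 - 2*s^2 + s - 1))/s := by field_simp; ring
    rw [e]
    exact div_nonneg (by linarith) hs0.le
  -- load values at x
  have hl0 : load s ![1/s, (s - 1)/s, 1/s, 2 - s] ![1,0,0,1] ![0,1,0,1] 0 = (s+1)/s := by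
    simp [load_eq, Fin.sum_univ_four, ptime]
    all_goals field_simp
    all_goals ring
  have hl1 : load s ![1/s, (s - 1)/s, 1/s, 2 - s] ![1,0,0,1] ![0,1,0,1] 1 = 1 := by
    simp [load_eq, Fin.sum_univ_four, ptime, e2]
    all_goals linarith [e1]
  have hmk : makespan s ![1/s, (s - 1)/s, 1/s, 2 - s] ![1,0,0,1] ![0,1,0,1] = (s+1)/s := by
    rw [makespan, hl0, hl1, max_eq_left]
    rw [le_div_iff₀ hs0]; linarith
  have hmkx1 : (1:ℝ) ≤ (s+1)/s := by rw [le_div_iff₀ hs0]; linarith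
  have hopt : optMakespan s ![1/s, (s - 1)/s, 1/s, 2 - s] ![1,0,0,1] ≤ 1 := by
    have hbdd : BddBelow (Set.range fun y : Fin 4 → Fin 2 =>
        makespan s ![1/s, (s - 1)/s, 1/s, 2 - s] ![1,0,0,1] y) := by
      refine ⟨0, ?_⟩
      rintro m ⟨y, rfl⟩
      refine le_trans ?_ (le_max_left _ _)
      apply Finset.sum_nonneg
      intro j _
      have hqj : (0:ℝ) ≤ ![1/s, (s - 1)/s, 1/s, 2 - s] j := by
        fin_cases j
        · simp; positivity
        · simp; exact div_nonneg (by linarith) hs0.le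
        · simp; positivity
        · simp; linarith
      unfold ptime
      split
      · exact hqj
      · exact mul_nonneg hs0.le hqj
    refine le_trans (ciInf_le hbdd ![1,0,0,1]) ?_
    have ha : load s ![1/s, (s - 1)/s, 1/s, 2 - s] ![1,0,0,1] ![1,0,0,1] 0 = 1 := by
      simp [load_eq, Fin.sum_univ_four, ptime, e2]
    have hb : load s ![1/s, (s - 1)/s, 1/s, 2 - s] ![1,0,0,1] ![1,0,0,1] 1 = 1/s + (2-s) := by
      simp [load_eq, Fin.sum_univ_four, ptime]
      all_goals ring
    rw [makespan, ha, hb]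
    refine max_le le_rfl ?_
    rw [← sub_nonneg]
    have e : 1 - (1/s + (2-s)) = (s^2 - s - 1)/s := by field_simp; ring
    rw [e]
    exact div_nonneg (by linarith) hs0.le
  refine ⟨?_, hmk, hopt, ?_⟩
  · -- IsSE
    intro y hy
    rcases fin2 (y 0) with h0 | h0 <;> rcases fin2 (y 1) with h1 | h1 <;>
      rcases fin2 (y 2) with h2 | h2 <;> rcases fin2 (y 3) with h3 | h3
    -- (0,0,0,0) witness B=1
    · refine ⟨1, by simp [h1], ?_⟩
      simp [load_eq, Fin.sum_univ_four, ptime, h0, h1, h2, h3, hl0, hl1]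
      all_goals nlinarith [e1, e2, e3, e4, e5, hc', mul_pos hs0 (sub_pos.mpr hs2)]
    -- (0,0,0,1) B
    · refine ⟨1, by simp [h1], ?_⟩
      simp [load_eq, Fin.sum_univ_four, ptime, h0, h1, h2, h3, hl0, hl1]
      all_goals nlinarith [e1, e2, e3, e4, e5, hc', mul_pos hs0 (sub_pos.mpr hs2)]
    -- (0,0,1,0) B
    · refine ⟨1, by simp [h1], ?_⟩
      simp [load_eq, Fin.sum_univ_four, ptime, h0, h1, h2, h3, hl0, hl1]
      all_goals nlinarith [e1, e2, e3, e4, e5, hc', mul_pos hs0 (sub_pos.mpr hs2)]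
    -- (0,0,1,1) B
    · refine ⟨1, by simp [h1], ?_⟩
      simp [load_eq, Fin.sum_univ_four, ptime, h0, h1, h2, h3, hl0, hl1]
      all_goals nlinarith [e1, e2, e3, e4, e5, hc', mul_pos hs0 (sub_pos.mpr hs2)]
    -- (0,1,0,0) E=3
    · refine ⟨3, by simp [h3], ?_⟩
      simp [load_eq, Fin.sum_univ_four, ptime, h0, h1, h2, h3, hl0, hl1]
      all_goals nlinarith [e1, e2, e3, e4, e5, hc', mul_pos hs0 (sub_pos.mpr hs2)]
    -- (0,1,0,1) = x : contradiction
    · exfalso; obtain ⟨j, hj⟩ := hy; fin_cases j <;> simp_all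
    -- (0,1,1,0) E
    · refine ⟨3, by simp [h3], ?_⟩
      simp [load_eq, Fin.sum_univ_four, ptime, h0, h1, h2, h3, hl0, hl1]
      all_goals nlinarith [e1, e2, e3, e4, e5, hc', mul_pos hs0 (sub_pos.mpr hs2)]
    -- (0,1,1,1) C=2
    · refine ⟨2, by simp [h2], ?_⟩
      simp [load_eq, Fin.sum_univ_four, ptime, h0, h1, h2, h3, hl0, hl1]
      all_goals nlinarith [e1, e2, e3, e4, e5, hc', mul_pos hs0 (sub_pos.mpr hs2)]
    -- (1,0,0,0) B
    · refine ⟨1, by simp [h1], ?_⟩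
      simp [load_eq, Fin.sum_univ_four, ptime, h0, h1, h2, h3, hl0, hl1]
      all_goals nlinarith [e1, e2, e3, e4, e5, hc', mul_pos hs0 (sub_pos.mpr hs2)]
    -- (1,0,0,1) B
    · refine ⟨1, by simp [h1], ?_⟩
      simp [load_eq, Fin.sum_univ_four, ptime, h0, h1, h2, h3, hl0, hl1]
      all_goals nlinarith [e1, e2, e3, e4, e5, hc', mul_pos hs0 (sub_pos.mpr hs2)]
    -- (1,0,1,0) A=0
    · refine ⟨0, by simp [h0], ?_⟩
      simp [load_eq, Fin.sum_univ_four, ptime, h0, h1, h2, h3, hl0, hl1]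
      all_goals nlinarith [e1, e2, e3, e4, e5, hc', mul_pos hs0 (sub_pos.mpr hs2)]
    -- (1,0,1,1) A
    · refine ⟨0, by simp [h0], ?_⟩
      simp [load_eq, Fin.sum_univ_four, ptime, h0, h1, h2, h3, hl0, hl1]
      all_goals nlinarith [e1, e2, e3, e4, e5, hc', mul_pos hs0 (sub_pos.mpr hs2)]
    -- (1,1,0,0) E : cubic case
    · refine ⟨3, by simp [h3], ?_⟩
      simp [load_eq, Fin.sum_univ_four, ptime, h0, h1, h2, h3, hl0, hl1]
      all_goals nlinarith [e1, e2, e3, e4, e5, hc', mul_pos hs0 (sub_pos.mpr hs2)]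
    -- (1,1,0,1) A
    · refine ⟨0, by simp [h0], ?_⟩
      simp [load_eq, Fin.sum_univ_four, ptime, h0, h1, h2, h3, hl0, hl1]
      all_goals nlinarith [e1, e2, e3, e4, e5, hc', mul_pos hs0 (sub_pos.mpr hs2)]
    -- (1,1,1,0) A
    · refine ⟨0, by simp [h0], ?_⟩
      simp [load_eq, Fin.sum_univ_four, ptime, h0, h1, h2, h3, hl0, hl1]
      all_goals nlinarith [e1, e2, e3, e4, e5, hc', mul_pos hs0 (sub_pos.mpr hs2)]
    -- (1,1,1,1) A
    · refine ⟨0, by simp [h0], ?_⟩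
      simp [load_eq, Fin.sum_univ_four, ptime, h0, h1, h2, h3, hl0, hl1]
      all_goals nlinarith [e1, e2, e3, e4, e5, hc', mul_pos hs0 (sub_pos.mpr hs2)]
  · rw [hmk]
    calc (s + 1)/s * optMakespan s ![1/s, (s - 1)/s, 1/s, 2 - s] ![1,0,0,1]
        ≤ (s + 1)/s * 1 := by
          apply mul_le_mul_of_nonneg_left hopt
          positivity
      _ = (s + 1)/s := mul_one _
end

section
/- Let s₇ ≈ 2.247 be the unique root in the interval (2,3) of s³ − 2s² − s + 1 = 0. Fix a real s with s ≥ s₇ and consider the instance of the favorite-machine scheduling game on two machines with parameter s consisting of three jobs: A of size (s + 1)/s² with favorite machine 2; D of size 1/s with favorite machine 2; and E of size (s² − s − 1)/s² with favorite machine 2. Then the allocation assigning A to machine 1 and D, E to machine 2 is a strong equilibrium whose makespan equals (s + 1)/s, while the optimal makespan of this instance is at most 1. Consequently, the strong price of anarchy at parameter s is at least (s + 1)/s. -/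
open Finset

private lemma load_eq3 (s : ℝ) (q : Fin 3 → ℝ) (f : Fin 3 → Fin 2)
    (x : Fin 3 → Fin 2) (i : Fin 2) :
    load s q f x i = ∑ j : Fin 3, if x j = i then ptime s q f i j else 0 := by
  rw [load, sum_filter]

theorem spoa_lower_interval8
    (s₇ : ℝ) (hs₇lo : 2 < s₇) (hs₇hi : s₇ < 3)
    (hs₇root : s₇^3 - 2*s₇^2 - s₇ + 1 = 0)
    (s : ℝ) (hs : s₇ ≤ s)
    (q : Fin 3 → ℝ) (hq : q = ![(s + 1)/s^2, 1/s, (s^2 - s - 1)/s^2])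
    (f : Fin 3 → Fin 2) (hf : f = ![1, 1, 1])
    (x : Fin 3 → Fin 2) (hx : x = ![0, 1, 1]) :
    IsSE s q f x ∧
      makespan s q f x = (s + 1)/s ∧
      optMakespan s q f ≤ 1 ∧
      ((s + 1)/s) * optMakespan s q f ≤ makespan s q f x := by
  subst hq hf hx
  have hs2 : (2:ℝ) < s := lt_of_lt_of_le hs₇lo hs
  have hs0 : (0:ℝ) < s := by linarith
  have hsne : s ≠ 0 := ne_of_gt hs0
  have hcube : 0 ≤ s^3 - 2*s^2 - s + 1 := by
    nlinarith [mul_nonneg (sub_nonneg.2 hs)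
      (by nlinarith : (0:ℝ) ≤ s^2 + s*s₇ + s₇^2 - 2*s - 2*s₇ - 1)]
  have hfin : ∀ i : Fin 2, i = 0 ∨ i = 1 := by decide
  have hM : makespan s ![(s + 1)/s^2, 1/s, (s^2 - s - 1)/s^2] ![1,1,1] ![0,1,1] = (s+1)/s := by
    unfold makespan
    rw [load_eq3, load_eq3, Fin.sum_univ_three, Fin.sum_univ_three]
    simp [ptime]
    rw [max_eq_left]
    · field_simp
    · field_simp
      first
        | rw [div_le_div_iff (by positivity) (by positivity)]
        | rw [div_le_one (by positivity)]
        | skip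
      nlinarith [hcube, mul_nonneg hs0.le hcube, sq_nonneg s, mul_pos hs0 hs0]
  have hopt : optMakespan s ![(s + 1)/s^2, 1/s, (s^2 - s - 1)/s^2] ![1,1,1] ≤ 1 := by
    have h := ciInf_le (f := fun y => makespan s ![(s + 1)/s^2, 1/s, (s^2 - s - 1)/s^2] ![1,1,1] y)
      (Finite.bddBelow_range _) ![1,0,1]
    refine le_trans h ?_
    unfold makespan
    rw [load_eq3, load_eq3, Fin.sum_univ_three, Fin.sum_univ_three]
    simp [ptime]
    constructor <;> field_simp <;> nlinarith
  refine ⟨?_, hM, hopt, ?_⟩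
  · intro y hy
    rcases hfin (y 0) with h0 | h0 <;> rcases hfin (y 1) with h1 | h1 <;>
      rcases hfin (y 2) with h2 | h2
    · -- (0,0,0): witness D (job 1)
      refine ⟨1, by simp [h1], ?_⟩
      rw [h1, load_eq3, load_eq3, Fin.sum_univ_three, Fin.sum_univ_three]
      simp [ptime, h0, h1, h2]
      field_simp
      first
        | rw [div_le_div_iff (by positivity) (by positivity)]
        | rw [div_le_one (by positivity)]
        | skip
      nlinarith [hcube, mul_nonneg hs0.le hcube, sq_nonneg s, mul_pos hs0 hs0]
    · -- (0,0,1): witness D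
      refine ⟨1, by simp [h1], ?_⟩
      rw [h1, load_eq3, load_eq3, Fin.sum_univ_three, Fin.sum_univ_three]
      simp [ptime, h0, h1, h2]
      field_simp
      first
        | rw [div_le_div_iff (by positivity) (by positivity)]
        | rw [div_le_one (by positivity)]
        | skip
      nlinarith [hcube, mul_nonneg hs0.le hcube, sq_nonneg s, mul_pos hs0 hs0]
    · -- (0,1,0): witness E (job 2)
      refine ⟨2, by simp [h2], ?_⟩
      rw [h2, load_eq3, load_eq3, Fin.sum_univ_three, Fin.sum_univ_three]
      simp [ptime, h0, h1, h2]
      field_simp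
      first
        | rw [div_le_div_iff (by positivity) (by positivity)]
        | rw [div_le_one (by positivity)]
        | skip
      nlinarith [hcube, mul_nonneg hs0.le hcube, sq_nonneg s, mul_pos hs0 hs0]
    · -- (0,1,1): no deviation, contradiction
      exfalso; obtain ⟨j, hj⟩ := hy
      fin_cases j <;> simp_all
    · -- (1,0,0): witness D
      refine ⟨1, by simp [h1], ?_⟩
      rw [h1, load_eq3, load_eq3, Fin.sum_univ_three, Fin.sum_univ_three]
      simp [ptime, h0, h1, h2]
      field_simp
      first
        | rw [div_le_div_iff (by positivity) (by positivity)]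
        | rw [div_le_one (by positivity)]
        | skip
      nlinarith [hcube, mul_nonneg hs0.le hcube, sq_nonneg s, mul_pos hs0 hs0]
    · -- (1,0,1): witness D
      refine ⟨1, by simp [h1], ?_⟩
      rw [h1, load_eq3, load_eq3, Fin.sum_univ_three, Fin.sum_univ_three]
      simp [ptime, h0, h1, h2]
      field_simp
      first
        | rw [div_le_div_iff (by positivity) (by positivity)]
        | rw [div_le_one (by positivity)]
        | skip
      nlinarith [hcube, mul_nonneg hs0.le hcube, sq_nonneg s, mul_pos hs0 hs0]
    · -- (1,1,0): witness E, needs the cubic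
      refine ⟨2, by simp [h2], ?_⟩
      rw [h2, load_eq3, load_eq3, Fin.sum_univ_three, Fin.sum_univ_three]
      simp [ptime, h0, h1, h2]
      field_simp
      first
        | rw [div_le_div_iff (by positivity) (by positivity)]
        | rw [div_le_one (by positivity)]
        | skip
      nlinarith [hcube, mul_nonneg hs0.le hcube, sq_nonneg s, mul_pos hs0 hs0]
    · -- (1,1,1): witness A (job 0)
      refine ⟨0, by simp [h0], ?_⟩
      rw [h0, load_eq3, load_eq3, Fin.sum_univ_three, Fin.sum_univ_three]
      simp [ptime, h0, h1, h2]
      field_simp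
      first
        | rw [div_le_div_iff (by positivity) (by positivity)]
        | rw [div_le_one (by positivity)]
        | skip
      nlinarith [hcube, mul_nonneg hs0.le hcube, sq_nonneg s, mul_pos hs0 hs0]
  · calc ((s + 1)/s) * optMakespan s ![(s + 1)/s^2, 1/s, (s^2 - s - 1)/s^2] ![1,1,1]
        ≤ ((s + 1)/s) * 1 := by
          exact mul_le_mul_of_nonneg_left hopt (by positivity)
      _ = (s+1)/s := mul_one _
      _ = _ := hM.symm
end
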